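/- Let k, λ ∈ ℕ with λ ≥ k+1, and let G be a graph with treewidth at most k. Define G^(λ) to be the graph on V(G) where u and v are adjacent whenever there are λ pairwise internally disjoint (u,v)-paths in G. Then G^(λ) has treewidth at most k. -/

import Mathlib

open SimpleGraph

universe u

/-- A tree-decomposition of a graph `G`. -/
structure TreeDecomp {V : Type u} (G : SimpleGraph V) : Type (u + 1) where
  ι : Type u
  T : SimpleGraph ι
  isTree : T.IsTree
  bag : ι → Set V
  mem_bag : ∀ v : V, ∃ i, v ∈ bag i
  edge_bag : ∀ ⦃u v : V⦄, G.Adj u v → ∃ i, u ∈ bag i ∧ v ∈ bag i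
  bag_conn : ∀ v : V, (T.induce {i | v ∈ bag i}).Connected

/-- `G` has treewidth at most `k`: it admits a tree-decomposition with bags of size ≤ k+1. -/
def TreewidthLE {V : Type u} (G : SimpleGraph V) (k : ℕ) : Prop :=
  ∃ d : TreeDecomp G, ∀ i, (d.bag i).ncard ≤ k + 1

/-- The treewidth of `G`. -/
noncomputable def treewidth {V : Type u} (G : SimpleGraph V) : ℕ :=
  sInf {k | TreewidthLE G k}

/-- `G` has a `c`-tree-partition of width at most `ℓ`: an `H`-partition with `tw(H) ≤ c`
in which every part has at most `ℓ` vertices. -/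
def TreePartWidthLE {V : Type u} (G : SimpleGraph V) (c ℓ : ℕ) : Prop :=
  ∃ (ι : Type u) (H : SimpleGraph ι) (P : V → ι),
    TreewidthLE H c ∧
    (∀ ⦃u v : V⦄, G.Adj u v → P u = P v ∨ H.Adj (P u) (P v)) ∧
    ∀ i : ι, {v : V | P v = i}.ncard ≤ ℓ

/-- The `c`-tree-partition-width of `G`. -/
noncomputable def tpw {V : Type u} (G : SimpleGraph V) (c : ℕ) : ℕ :=
  sInf {ℓ | TreePartWidthLE G c ℓ}


/-- The graph `G^(λ)` on `V(G)`: `u` and `v` are adjacent whenever there are `λ`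
pairwise internally disjoint `(u,v)`-paths in `G`. -/
def powGraph {V : Type u} (G : SimpleGraph V) (lam : ℕ) : SimpleGraph V :=
  SimpleGraph.fromRel fun u v =>
    ∃ P : Fin lam → G.Walk u v,
      (∀ i, (P i).IsPath) ∧
      ∀ i j, i ≠ j → ∀ x, x ∈ (P i).support → x ∈ (P j).support → x = u ∨ x = v

section Aux

universe w
variable {ι : Type w} {T : SimpleGraph ι}

/-- One-step transfer along a walk. -/
lemma side_step {i j : ι} {a b : ι} (w : T.Walk a b)
    (hb : (T \ fromEdgeSet {s(i, j)}).Reachable b i ∨ (T \ fromEdgeSet {s(i, j)}).Reachable b j) :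
    (T \ fromEdgeSet {s(i, j)}).Reachable a i ∨ (T \ fromEdgeSet {s(i, j)}).Reachable a j := by
  induction w with
  | nil => exact hb
  | @cons a c _ h w ih =>
    have hstep := ih hb
    by_cases he : s(a, c) = s(i, j)
    · rcases Sym2.eq_iff.mp he with ⟨rfl, rfl⟩ | ⟨rfl, rfl⟩
      · exact Or.inl (Reachable.refl _)
      · exact Or.inr (Reachable.refl _)
    · have hadj : (T \ fromEdgeSet {s(i, j)}).Adj a c := by
        rw [sdiff_adj, fromEdgeSet_adj]
        exact ⟨h, fun hc => he hc.1⟩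
      rcases hstep with h1 | h1
      · exact Or.inl (hadj.reachable.trans h1)
      · exact Or.inr (hadj.reachable.trans h1)

/-- Every vertex is on one of the two sides of an edge of a connected graph. -/
lemma side_total (hT : T.Connected) {i j : ι} (p : ι) :
    (T \ fromEdgeSet {s(i, j)}).Reachable p i ∨ (T \ fromEdgeSet {s(i, j)}).Reachable p j := by
  obtain ⟨wk⟩ := hT p i
  exact side_step wk (Or.inl (Reachable.refl _))

lemma side_disj (hac : T.IsAcyclic) {i j : ι} (hij : T.Adj i j) :
    ¬ (T \ fromEdgeSet {s(i, j)}).Reachable i j := by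
  have hb := (isAcyclic_iff_forall_adj_isBridge.mp hac) hij
  rw [isBridge_iff] at hb
  exact hb

/-- A walk avoiding the vertex `i` stays within one side of the edge `s(i,j)`. -/
lemma reachable_of_avoid {i j a b : ι} (w : T.Walk a b) (hav : i ∉ w.support) :
    (T \ fromEdgeSet {s(i, j)}).Reachable a b := by
  induction w with
  | nil => exact Reachable.refl _
  | @cons a c _ h w ih =>
    rw [SimpleGraph.Walk.support_cons, List.mem_cons] at hav
    push_neg at hav
    have hc : i ∉ w.support := hav.2
    have ha' : a ≠ i := fun hh => hav.1 hh.symm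
    have hc' : c ≠ i := fun hh => hc (hh ▸ w.start_mem_support)
    have hadj : (T \ fromEdgeSet {s(i, j)}).Adj a c := by
      rw [sdiff_adj, fromEdgeSet_adj]
      refine ⟨h, fun hcon => ?_⟩
      rcases Sym2.eq_iff.mp hcon.1 with ⟨rfl, rfl⟩ | ⟨h1, h2⟩
      · exact ha' rfl
      · exact hc' h2
    exact hadj.reachable.trans (ih hc)

/-- Crossing lemma: a walk in an induced subgraph from the `i`-side to the `j`-side of the
edge `s(i,j)` forces both `i` and `j` to belong to the inducing set. -/
lemma induced_cross (hac : T.IsAcyclic) {i j : ι} (hij : T.Adj i j) {S : Set ι} :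
    ∀ {p q : S} (_ : (T.induce S).Walk p q),
      (T \ fromEdgeSet {s(i, j)}).Reachable p.1 i →
      (T \ fromEdgeSet {s(i, j)}).Reachable q.1 j → i ∈ S ∧ j ∈ S := by
  intro p q w
  induction w with
  | nil =>
    intro hp hq
    exact absurd (hp.symm.trans hq) (side_disj hac hij)
  | @cons a c _ h w ih =>
    intro hp hq
    have hTac : T.Adj a.1 c.1 := h
    by_cases he : s(a.1, c.1) = s(i, j)
    · rcases Sym2.eq_iff.mp he with ⟨h1, h2⟩ | ⟨h1, h2⟩
      · exact ⟨h1 ▸ a.2, h2 ▸ c.2⟩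
      · exfalso
        exact side_disj hac hij (((h1 ▸ hp) : _).symm)
    · have hadj : (T \ fromEdgeSet {s(i, j)}).Adj c.1 a.1 := by
        rw [sdiff_adj, fromEdgeSet_adj]
        refine ⟨hTac.symm, fun hcon => ?_⟩
        have h1 : s(c.1, a.1) = s(i, j) := hcon.1
        exact he ((Sym2.eq_swap).trans h1)
      exact ih (hadj.reachable.trans hp) hq

/-- Along a path from inside `S` to outside `S` there is a boundary edge whose first endpoint
does not reappear later. -/
lemma exists_boundary {S : Set ι} :
    ∀ {a b : ι} (w : T.Walk a b), w.IsPath → a ∈ S → b ∉ S →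
      ∃ (x y : ι) (w' : T.Walk y b), T.Adj x y ∧ x ∈ S ∧ y ∉ S ∧ x ∉ w'.support := by
  intro a b w
  induction w with
  | nil => intro _ ha hb; exact absurd ha hb
  | @cons a c _ h w ih =>
    intro hp ha hb
    by_cases hc : c ∈ S
    · exact ih hp.of_cons hc hb
    · refine ⟨a, c, w, h, ha, hc, ?_⟩
      exact (SimpleGraph.Walk.cons_isPath_iff _ _ |>.mp hp).2

end Aux

lemma conn_aux {α : Type} [Nonempty α] [Subsingleton α] (H : SimpleGraph α) : H.Connected :=
  SimpleGraph.Connected.mk (fun a b => by rw [Subsingleton.elim a b])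

section Aux2
variable {V : Type}

/-- Key lemma: with `λ ≥ k+1` internally disjoint `u`-`v` paths, `u` and `v` lie in a
common bag of any width-`k` tree decomposition, provided `V` is finite. -/
lemma common_bag [Finite V] {G : SimpleGraph V} (d : TreeDecomp G)
    (hw : ∀ i, (d.bag i).ncard ≤ k + 1) {lam : ℕ} (hlam : k + 1 ≤ lam) {u v : V}
    (P : Fin lam → G.Walk u v)
    (hdisj : ∀ i j, i ≠ j → ∀ x, x ∈ (P i).support → x ∈ (P j).support → x = u ∨ x = v) :
    ∃ i, u ∈ d.bag i ∧ v ∈ d.bag i := by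
  by_contra hno
  push_neg at hno
  classical
  obtain ⟨i0, hi0⟩ := d.mem_bag u
  obtain ⟨j0, hj0⟩ := d.mem_bag v
  -- a path in the tree from a bag containing u to a bag containing v
  obtain ⟨wk⟩ := d.isTree.isConnected i0 j0
  have hj0u : j0 ∉ {p | u ∈ d.bag p} := fun h => hno j0 h hj0
  obtain ⟨i, j, w', hij, hiu, hju, hiw'⟩ :=
    exists_boundary wk.toPath.1 wk.toPath.2 hi0 hj0u
  set T' := d.T \ fromEdgeSet {s(i, j)} with hT'
  have hac := d.isTree.IsAcyclic
  have hconn := d.isTree.isConnected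
  -- j0 is on the j-side
  have hj0side : T'.Reachable j0 j := (reachable_of_avoid w' hiw').symm
  -- every bag containing u is on the i-side
  have hTu : ∀ p, u ∈ d.bag p → T'.Reachable p i := by
    intro p hp
    rcases side_total hconn p with h | h
    · exact h
    · exfalso
      obtain ⟨w⟩ := (d.bag_conn u) ⟨i, hiu⟩ ⟨p, hp⟩
      have := induced_cross hac hij w (Reachable.refl _) h
      exact hju this.2
  -- every bag containing v is on the j-side
  have hTv : ∀ p, v ∈ d.bag p → T'.Reachable p j := by
    intro p hp
    rcases side_total hconn p with h | h
    · exfalso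
      obtain ⟨w⟩ := (d.bag_conn v) ⟨p, hp⟩ ⟨j0, hj0⟩
      have := induced_cross hac hij w h hj0side
      exact hno i hiu this.1
    · exact h
  -- the separator
  set S : Set V := d.bag i ∩ d.bag j with hS
  have hAB : ∀ x : V, (∃ p, T'.Reachable p i ∧ x ∈ d.bag p) →
      (∃ q, T'.Reachable q j ∧ x ∈ d.bag q) → x ∈ S := by
    rintro x ⟨p, hpi, hxp⟩ ⟨q, hqj, hxq⟩
    obtain ⟨w⟩ := (d.bag_conn x) ⟨p, hxp⟩ ⟨q, hxq⟩
    exact induced_cross hac hij w hpi hqj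
  have huS : u ∉ S := fun h => hju h.2
  have hvS : v ∉ S := fun h => hno i hiu h.1
  -- every walk between the two sides meets S
  have hsep : ∀ (a b : V) (w : G.Walk a b), (∃ p, T'.Reachable p i ∧ a ∈ d.bag p) →
      (∃ q, T'.Reachable q j ∧ b ∈ d.bag q) → ∃ x ∈ w.support, x ∈ S := by
    intro a b w
    induction w with
    | nil =>
      intro ha hb
      exact ⟨_, SimpleGraph.Walk.start_mem_support _, hAB _ ha hb⟩
    | @cons a c _ h w ih =>
      intro ha hb
      obtain ⟨p, hap, hcp⟩ := d.edge_bag h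
      rcases side_total hconn (i := i) (j := j) p with hside | hside
      · obtain ⟨x, hx1, hx2⟩ := ih ⟨p, hside, hcp⟩ hb
        exact ⟨x, by simp [SimpleGraph.Walk.support_cons, hx1], hx2⟩
      · exact ⟨a, SimpleGraph.Walk.start_mem_support _, hAB a ha ⟨p, hside, hap⟩⟩
  -- pick a separator vertex on each path
  have hpick : ∀ m : Fin lam, ∃ x ∈ (P m).support, x ∈ S := fun m =>
    hsep u v (P m) ⟨i, Reachable.refl _, hiu⟩ ⟨j0, hj0side, hj0⟩
  choose f hf1 hf2 using hpick
  have hinj : Function.Injective f := by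
    intro m m' hmm
    by_contra hne
    rcases hdisj m m' hne (f m) (hf1 m) (hmm ▸ hf1 m') with h | h
    · exact huS (h ▸ hf2 m)
    · exact hvS (h ▸ hf2 m)
  -- cardinality contradiction
  have hsub : insert u (Set.range f) ⊆ d.bag i := by
    intro x hx
    rcases hx with rfl | ⟨m, rfl⟩
    · exact hiu
    · exact (hf2 m).1
  have hu_not : u ∉ Set.range f := by
    rintro ⟨m, rfl⟩
    exact huS (hf2 m)
  have hcard : (insert u (Set.range f)).ncard = lam + 1 := by
    rw [Set.ncard_insert_of_notMem hu_not (Set.toFinite _)]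
    have : (Set.range f).ncard = lam := by
      rw [← Nat.card_coe_set_eq, Nat.card_range_of_injective hinj]
      simp
    omega
  have hle : (insert u (Set.range f)).ncard ≤ k + 1 :=
    le_trans (Set.ncard_le_ncard hsub (Set.toFinite _)) (hw i)
  omega

end Aux2

/-- If `λ ≥ k+1` and `G` has treewidth at most `k`, then `G^(λ)` has treewidth at most `k`. -/
theorem stmt_4 {V : Type} (G : SimpleGraph V) (k lam : ℕ) (hlam : k + 1 ≤ lam)
    (hG : TreewidthLE G k) : TreewidthLE (powGraph G lam) k := by
  cases finite_or_infinite V with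
  | inr hinf =>
    refine ⟨⟨Unit, ⊥, ?_, fun _ => Set.univ, fun v => ⟨(), trivial⟩,
        fun u v _ => ⟨(), trivial, trivial⟩, fun v => ?_⟩, fun _ => ?_⟩
    · refine ⟨conn_aux _, ?_⟩
      intro v c hc
      cases c with
      | nil => exact absurd rfl hc.ne_nil
      | cons h _ => exact h.elim
    · haveI : Nonempty ↑{i : Unit | v ∈ (fun _ => (Set.univ : Set V)) i} := ⟨⟨(), trivial⟩⟩
      exact conn_aux _
    · simp [Set.Infinite.ncard (Set.infinite_univ)]
  | inl hfin =>
    obtain ⟨d, hd⟩ := hG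
    refine ⟨⟨d.ι, d.T, d.isTree, d.bag, d.mem_bag, ?_, d.bag_conn⟩, hd⟩
    intro u v huv
    rw [powGraph, fromRel_adj] at huv
    rcases huv.2 with ⟨P, _, hdisj⟩ | ⟨P, _, hdisj⟩
    · exact common_bag d hd hlam P hdisj
    · obtain ⟨i, h1, h2⟩ := common_bag d hd hlam P hdisj
      exact ⟨i, h2, h1⟩
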